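/- arXiv:2003.13639 — 2 statements merged into one kernel-verified Lean document; each statement's English description precedes it below -/
import Mathlib

section
/- For any prime $d \ge 5$, the state $\ket{\mathrm{AME}(5,d)'} = \frac{1}{d}\sum_{i,j=0}^{d-1}\ket{i,j,i+j,2i+j,3i+j}$ (arithmetic mod $d$) is $2$-uniform: every reduction to two of the five parties equals $\frac{1}{d^2}\mathrm{Id}_{d^2}$. -/
/-- Combine an assignment on `S` and on its complement into a full assignment. -/
def mergeFn {N : ℕ} {A : Type*} (S : Finset (Fin N)) (a : {i // i ∈ S} → A)
    (g : {i // i ∉ S} → A) : Fin N → A :=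
  fun i => if h : i ∈ S then a ⟨i, h⟩ else g ⟨i, h⟩

/-- The reduced density matrix of a pure state `ψ` on the subsystem `S`. -/
noncomputable def reducedMatrix {N : ℕ} {A : Type*} [Fintype A] [DecidableEq A]
    (ψ : (Fin N → A) → ℂ) (S : Finset (Fin N)) :
    Matrix ({i // i ∈ S} → A) ({i // i ∈ S} → A) ℂ :=
  fun a b => ∑ g : {i // i ∉ S} → A,
    ψ (mergeFn S a g) * star (ψ (mergeFn S b g))

def vA (d : ℕ) : Fin 5 → ZMod d := ![1,0,1,2,3]
def vB (d : ℕ) : Fin 5 → ZMod d := ![0,1,1,1,1]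
def vfun (d : ℕ) (p : ZMod d × ZMod d) : Fin 5 → ZMod d :=
  fun i => vA d i * p.1 + vB d i * p.2

lemma det_ne {d : ℕ} (hp : d.Prime) (hd : 5 ≤ d) :
    ∀ i j : Fin 5, i ≠ j → vA d i * vB d j - vA d j * vB d i ≠ 0 := by
  haveI : Fact d.Prime := ⟨hp⟩
  have hc : ∀ k : ℕ, 0 < k → k < 5 → (k : ZMod d) ≠ 0 := by
    intro k hk1 hk2 h
    have := (ZMod.natCast_eq_zero_iff k d).mp h
    have := Nat.le_of_dvd hk1 this
    omega
  have h2 : (2 : ZMod d) ≠ 0 := by have := hc 2 (by norm_num) (by norm_num); push_cast at this; exact this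
  have h3 : (3 : ZMod d) ≠ 0 := by have := hc 3 (by norm_num) (by norm_num); push_cast at this; exact this
  intro i j hij
  fin_cases i <;> fin_cases j <;>
    simp_all [vA, vB] <;>
    (intro h;
      first
      | exact one_ne_zero (α := ZMod d) (by linear_combination h)
      | exact h2 (by linear_combination h)
      | exact h3 (by linear_combination h)
      | exact one_ne_zero (α := ZMod d) (by linear_combination -h)
      | exact h2 (by linear_combination -h)
      | exact h3 (by linear_combination -h))

lemma vfun_inj {d : ℕ} (hp : d.Prime) (hd : 5 ≤ d) {i j : Fin 5} (hij : i ≠ j)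
    {p q : ZMod d × ZMod d} (h1 : vfun d p i = vfun d q i) (h2 : vfun d p j = vfun d q j) :
    p = q := by
  haveI : Fact d.Prime := ⟨hp⟩
  have hD := det_ne hp hd i j hij
  unfold vfun at h1 h2
  have hx : (vA d i * vB d j - vA d j * vB d i) * (p.1 - q.1) = 0 := by
    linear_combination vB d j * h1 - vB d i * h2
  have hy : (vA d i * vB d j - vA d j * vB d i) * (p.2 - q.2) = 0 := by
    linear_combination vA d i * h2 - vA d j * h1
  have e1 : p.1 = q.1 := by
    rcases mul_eq_zero.mp hx with h | h
    · exact absurd h hD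
    · exact sub_eq_zero.mp h
  have e2 : p.2 = q.2 := by
    rcases mul_eq_zero.mp hy with h | h
    · exact absurd h hD
    · exact sub_eq_zero.mp h
  exact Prod.ext e1 e2

lemma P_vfun {d : ℕ} (p : ZMod d × ZMod d) :
    vfun d p 2 = vfun d p 0 + vfun d p 1 ∧ vfun d p 3 = 2 * vfun d p 0 + vfun d p 1 ∧
      vfun d p 4 = 3 * vfun d p 0 + vfun d p 1 := by
  refine ⟨?_, ?_, ?_⟩ <;> simp [vfun, vA, vB] <;> try ring

lemma P_iff {d : ℕ} (f : Fin 5 → ZMod d) :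
    (f 2 = f 0 + f 1 ∧ f 3 = 2 * f 0 + f 1 ∧ f 4 = 3 * f 0 + f 1) ↔
      f = vfun d (f 0, f 1) := by
  constructor
  · rintro ⟨h2, h3, h4⟩
    funext i
    fin_cases i <;> simp [vfun, vA, vB, h2, h3, h4] <;> try ring
  · intro h
    rw [h]
    exact P_vfun (f 0, f 1)

lemma mySumCollapse {d : ℕ} [NeZero d] (f : Fin 5 → ZMod d) :
    (∑ i : ZMod d, ∑ j : ZMod d,
      if f 0 = i ∧ f 1 = j ∧ f 2 = i + j ∧ f 3 = 2 * i + j ∧ f 4 = 3 * i + j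
      then (1:ℂ) else 0)
    = if f = vfun d (f 0, f 1) then 1 else 0 := by
  have : ∀ i j : ZMod d,
      (f 0 = i ∧ f 1 = j ∧ f 2 = i + j ∧ f 3 = 2 * i + j ∧ f 4 = 3 * i + j) ↔
      (f 0 = i ∧ f 1 = j ∧ (f 2 = f 0 + f 1 ∧ f 3 = 2 * f 0 + f 1 ∧ f 4 = 3 * f 0 + f 1)) := by
    intro i j
    constructor
    · rintro ⟨hi, hj, h⟩; subst hi; subst hj; exact ⟨rfl, rfl, h⟩
    · rintro ⟨hi, hj, h⟩; subst hi; subst hj; exact ⟨rfl, rfl, h⟩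
  simp only [this]
  rw [Finset.sum_eq_single (f 0)]
  · rw [Finset.sum_eq_single (f 1)]
    · simp only [eq_self_iff_true, true_and]
      exact if_congr (P_iff f) rfl rfl
    · intro j _ hj; simp [Ne.symm hj]
    · simp
  · intro i _ hi
    apply Finset.sum_eq_zero
    intro j _
    simp [Ne.symm hi]
  · simp

/-- For any prime `d ≥ 5`, the state `(1/d) ∑_{i,j} |i, j, i+j, 2i+j, 3i+j⟩`
(arithmetic mod `d`) is 2-uniform: every two-party reduction is `(1/d²)·Id`. -/
theorem ame5d_prime_two_uniform {d : ℕ} [NeZero d] (hp : d.Prime) (hd : 5 ≤ d) :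
    ∀ S : Finset (Fin 5), S.card = 2 →
      reducedMatrix (fun f : Fin 5 → ZMod d =>
        ((d : ℂ))⁻¹ * ∑ i : ZMod d, ∑ j : ZMod d,
          if f 0 = i ∧ f 1 = j ∧ f 2 = i + j ∧ f 3 = 2 * i + j ∧ f 4 = 3 * i + j
          then 1 else 0) S
      = (((d : ℂ) ^ 2)⁻¹) • (1 : Matrix _ _ ℂ) := by
  intro S hS
  haveI : Fact d.Prime := ⟨hp⟩
  obtain ⟨x, y, hxy, hSxy⟩ := Finset.card_eq_two.mp hS
  set Φ : ZMod d × ZMod d → ({i // i ∈ S} → ZMod d) := fun p z => vfun d p z.1 with hΦ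
  have hΦinj : Function.Injective Φ := by
    intro p q h
    have hx' : vfun d p x = vfun d q x := congrFun h ⟨x, by simp [hSxy]⟩
    have hy' : vfun d p y = vfun d q y := congrFun h ⟨y, by simp [hSxy]⟩
    exact vfun_inj hp hd hxy hx' hy'
  have hcard : Fintype.card (ZMod d × ZMod d) = Fintype.card ({i // i ∈ S} → ZMod d) := by
    simp [ZMod.card, hS, sq]
  have hΦbij : Function.Bijective Φ := (Fintype.bijective_iff_injective_and_card Φ).mpr ⟨hΦinj, hcard⟩
  ext a b
  obtain ⟨p, hpa⟩ := hΦbij.surjective a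
  obtain ⟨q, hqb⟩ := hΦbij.surjective b
  -- key: the state indicator for a merged function
  have key : ∀ (r : ZMod d × ZMod d) (g : {i // i ∉ S} → ZMod d),
      (mergeFn S (Φ r) g = vfun d (mergeFn S (Φ r) g 0, mergeFn S (Φ r) g 1)) ↔
      g = fun z => vfun d r z.1 := by
    intro r g
    constructor
    · intro h
      set m := mergeFn S (Φ r) g with hm
      have hres : Φ (m 0, m 1) = Φ r := by
        funext z
        have h1 : m z.1 = vfun d (m 0, m 1) z.1 := congrFun h z.1
        have h2 : m z.1 = Φ r z := by simp [hm, mergeFn, z.2]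
        rw [hΦ]; dsimp only; rw [← h1, h2]
      have := hΦinj hres
      funext z
      have h1 : m z.1 = vfun d (m 0, m 1) z.1 := congrFun h z.1
      have h2 : m z.1 = g z := by simp [hm, mergeFn, z.2]
      rw [← h2, h1, this]
    · intro h
      subst h
      have hmv : mergeFn S (Φ r) (fun z => vfun d r z.1) = vfun d r := by
        funext i
        by_cases hi : i ∈ S <;> simp [mergeFn, hi, hΦ]
      rw [hmv]
      have h0 : vfun d r 0 = r.1 := by simp [vfun, vA, vB]
      have h1 : vfun d r 1 = r.2 := by simp [vfun, vA, vB]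
      rw [h0, h1]
  have entry : ∀ (r : ZMod d × ZMod d) (g : {i // i ∉ S} → ZMod d),
      ((d : ℂ))⁻¹ * (∑ i : ZMod d, ∑ j : ZMod d,
          if mergeFn S (Φ r) g 0 = i ∧ mergeFn S (Φ r) g 1 = j ∧
            mergeFn S (Φ r) g 2 = i + j ∧ mergeFn S (Φ r) g 3 = 2 * i + j ∧
            mergeFn S (Φ r) g 4 = 3 * i + j then (1:ℂ) else 0)
      = ((d : ℂ))⁻¹ * (if g = (fun z => vfun d r z.1) then 1 else 0) := by
    intro r g
    rw [mySumCollapse]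
    exact congrArg (fun t => ((d:ℂ))⁻¹ * t) (if_congr (key r g) rfl rfl)
  -- the two distinguished complement values
  have hcompl : 1 < (Sᶜ).card := by
    rw [Finset.card_compl, hS]
    simp
  obtain ⟨u, hu, v, hv, huv⟩ := Finset.one_lt_card.mp hcompl
  rw [Finset.mem_compl] at hu hv
  have hgp_iff : (fun z : {i // i ∉ S} => vfun d p z.1) = (fun z : {i // i ∉ S} => vfun d q z.1) ↔ p = q := by
    constructor
    · intro h
      exact vfun_inj hp hd huv (congrFun h ⟨u, hu⟩) (congrFun h ⟨v, hv⟩)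
    · intro h; rw [h]
  subst hpa
  subst hqb
  -- compute the entry
  have lhs_eq : reducedMatrix (fun f : Fin 5 → ZMod d =>
        ((d : ℂ))⁻¹ * ∑ i : ZMod d, ∑ j : ZMod d,
          if f 0 = i ∧ f 1 = j ∧ f 2 = i + j ∧ f 3 = 2 * i + j ∧ f 4 = 3 * i + j
          then 1 else 0) S (Φ p) (Φ q)
      = ∑ g : {i // i ∉ S} → ZMod d,
          (((d : ℂ))⁻¹ * (if g = (fun z => vfun d p z.1) then 1 else 0)) *
          star (((d : ℂ))⁻¹ * (if g = (fun z => vfun d q z.1) then 1 else 0)) := by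
    unfold reducedMatrix
    apply Finset.sum_congr rfl
    intro g _
    dsimp only
    rw [entry p g, entry q g]
  rw [lhs_eq]
  simp only [star_mul', star_inv₀, star_natCast, apply_ite (star (R := ℂ)), star_one, star_zero]
  simp only [mul_ite, ite_mul, mul_one, mul_zero, zero_mul, one_mul]
  rw [Finset.sum_ite_eq' Finset.univ (fun z : {i // i ∉ S} => vfun d q z.1)]
  simp only [Finset.mem_univ, if_true]
  by_cases hpq : p = q
  · subst hpq
    rw [if_pos rfl]
    simp [Matrix.smul_apply, Matrix.one_apply_eq, sq, mul_inv]
  · rw [if_neg (fun h => hpq (hgp_iff.mp h.symm))]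
    have : Φ p ≠ Φ q := fun h => hpq (hΦinj h)
    simp [Matrix.smul_apply, Matrix.one_apply_ne this]
end

section
/- For any $d \ge 2$, the state $\ket{\mathrm{AME}(5,d)} = \frac{1}{\sqrt{d^3}}\sum_{i,j,k=0}^{d-1}\omega^{(3i+j)k}\,\ket{i,j,i+j,2i+j+k,k}$, where $\omega = e^{2\pi i/d}$ and arithmetic is mod $d$, is $2$-uniform: every reduction to two of the five parties is $\frac{1}{d^2}\mathrm{Id}_{d^2}$. -/
noncomputable def ee (d : ℕ) [NeZero d] (t : ZMod d) : ℂ :=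
  Complex.exp (2 * Real.pi * Complex.I / d) ^ t.val

variable {d : ℕ} [NeZero d]

lemma ee_prim : IsPrimitiveRoot (Complex.exp (2 * Real.pi * Complex.I / d)) d :=
  Complex.isPrimitiveRoot_exp d (NeZero.ne d)

lemma ee_pow_d : Complex.exp (2 * Real.pi * Complex.I / d) ^ d = 1 :=
  ee_prim.pow_eq_one

lemma ee_pow_mod (m : ℕ) :
    Complex.exp (2 * Real.pi * Complex.I / d) ^ (m % d)
      = Complex.exp (2 * Real.pi * Complex.I / d) ^ m := by
  conv_rhs => rw [← Nat.mod_add_div m d]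
  rw [pow_add, pow_mul, ee_pow_d, one_pow, mul_one]

lemma ee_zero : ee d 0 = 1 := by simp [ee]

lemma ee_add (s t : ZMod d) : ee d (s + t) = ee d s * ee d t := by
  rw [ee, ee, ee, ZMod.val_add, ee_pow_mod, pow_add]

lemma ee_star (t : ZMod d) : star (ee d t) = ee d (-t) := by
  have hsω : star (Complex.exp (2 * Real.pi * Complex.I / d))
      = (Complex.exp (2 * Real.pi * Complex.I / d))⁻¹ := by
    rw [← Complex.exp_neg, Complex.star_def, ← Complex.exp_conj]
    congr 1
    rw [map_div₀, map_mul, map_mul, Complex.conj_I, Complex.conj_ofReal, map_ofNat,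
      map_natCast]
    ring
  rw [ee, star_pow, hsω, inv_pow]
  refine inv_eq_of_mul_eq_one_left ?_
  rw [← ee, ← ee_add, neg_add_cancel, ee_zero]

lemma ee_sub_mul (s t : ZMod d) : ee d s * star (ee d t) = ee d (s - t) := by
  rw [ee_star, ← ee_add, sub_eq_add_neg]

lemma sum_ee (t : ZMod d) :
    ∑ x : ZMod d, ee d (t * x) = if t = 0 then (d : ℂ) else 0 := by
  by_cases ht : t = 0
  · simp [ht, ee_zero, Finset.card_univ, ZMod.card]
  · rw [if_neg ht]
    have hterm : ∀ x : ZMod d,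
        ee d (t * x) = (Complex.exp (2 * Real.pi * Complex.I / d) ^ t.val) ^ x.val := by
      intro x
      rw [ee, ZMod.val_mul, ee_pow_mod, pow_mul]
    rw [Finset.sum_congr rfl fun x _ => hterm x]
    have hbij : ∑ x : ZMod d, (Complex.exp (2 * Real.pi * Complex.I / d) ^ t.val) ^ x.val
        = ∑ m ∈ Finset.range d, (Complex.exp (2 * Real.pi * Complex.I / d) ^ t.val) ^ m := by
      refine Finset.sum_nbij' (fun x => x.val) (fun m => (m : ZMod d)) ?_ ?_ ?_ ?_ ?_
      · intro x _; exact Finset.mem_range.mpr (ZMod.val_lt x)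
      · intro m _; exact Finset.mem_univ _
      · intro x _; exact ZMod.natCast_rightInverse x
      · intro m hm; exact ZMod.val_cast_of_lt (Finset.mem_range.mp hm)
      · intro x _; rfl
    rw [hbij]
    have hζ : Complex.exp (2 * Real.pi * Complex.I / d) ^ t.val ≠ 1 := by
      refine ee_prim.pow_ne_one_of_pos_of_lt ?_ (ZMod.val_lt t)
      exact fun h => ht ((ZMod.val_eq_zero t).mp h)
    rw [geom_sum_eq hζ]
    rw [← pow_mul, mul_comm t.val d, pow_mul, ee_pow_d, one_pow, sub_self, zero_div]

lemma sum_compl' (S : Finset (Fin 5)) (c0 c1 c2 : Fin 5)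
    (hmem : ∀ i : Fin 5, i ∉ S ↔ i = c0 ∨ i = c1 ∨ i = c2)
    (h01 : c0 ≠ c1) (h02 : c0 ≠ c2) (h12 : c1 ≠ c2)
    (F : ({i // i ∉ S} → ZMod d) → ℂ) :
    ∑ g : {i // i ∉ S} → ZMod d, F g
      = ∑ x : ZMod d, ∑ y : ZMod d, ∑ z : ZMod d,
          F (fun i => if i.1 = c0 then x else if i.1 = c1 then y else z) := by
  have hbij : Function.Bijective
      (fun (p : ZMod d × ZMod d × ZMod d) => (fun i : {i // i ∉ S} =>
        if i.1 = c0 then p.1 else if i.1 = c1 then p.2.1 else p.2.2)) := by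
    constructor
    · rintro ⟨x, y, z⟩ ⟨x', y', z'⟩ h
      have e0 := congrFun h ⟨c0, (hmem c0).mpr (Or.inl rfl)⟩
      have e1 := congrFun h ⟨c1, (hmem c1).mpr (Or.inr (Or.inl rfl))⟩
      have e2 := congrFun h ⟨c2, (hmem c2).mpr (Or.inr (Or.inr rfl))⟩
      simp only [if_pos rfl, if_neg (Ne.symm h01), if_neg (Ne.symm h02),
        if_neg (Ne.symm h12)] at e0 e1 e2
      exact Prod.ext e0 (Prod.ext e1 e2)
    · intro g
      refine ⟨(g ⟨c0, (hmem c0).mpr (Or.inl rfl)⟩,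
        g ⟨c1, (hmem c1).mpr (Or.inr (Or.inl rfl))⟩,
        g ⟨c2, (hmem c2).mpr (Or.inr (Or.inr rfl))⟩), funext fun i => ?_⟩
      obtain ⟨i, hi⟩ := i
      rcases (hmem i).mp hi with rfl | rfl | rfl
      · simp
      · simp [Ne.symm h01]
      · simp [Ne.symm h02, Ne.symm h12]
  rw [← Fintype.sum_bijective _ hbij _ (fun g => F g) (fun p => rfl),
    Fintype.sum_prod_type]
  simp only [Fintype.sum_prod_type]

lemma psi_apply (f : Fin 5 → ZMod d) (v0 v1 v2 v3 v4 : ZMod d)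
    (h0 : f 0 = v0) (h1 : f 1 = v1) (h2 : f 2 = v2) (h3 : f 3 = v3) (h4 : f 4 = v4) :
    ((Real.sqrt (d ^ 3) : ℂ))⁻¹ * ∑ i : ZMod d, ∑ j : ZMod d, ∑ k : ZMod d,
      (if f 0 = i ∧ f 1 = j ∧ f 2 = i + j ∧ f 3 = 2 * i + j + k ∧ f 4 = k
       then Complex.exp (2 * Real.pi * Complex.I / d) ^ (((3 * i + j) * k).val) else 0)
    = ((Real.sqrt (d ^ 3) : ℂ))⁻¹ *
        (if v2 = v0 + v1 ∧ v3 = 2 * v0 + v1 + v4 then ee d ((3 * v0 + v1) * v4) else 0) := by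
  subst h0 h1 h2 h3 h4
  congr 1
  rw [Finset.sum_eq_single (f 0)]
  · rw [Finset.sum_eq_single (f 1)]
    · rw [Finset.sum_eq_single (f 4)]
      · simp [ee]
      · intro k _ hk
        rw [if_neg]; rintro ⟨-, -, -, -, h⟩; exact hk h.symm
      · simp
    · intro j _ hj
      refine Finset.sum_eq_zero fun k _ => ?_
      rw [if_neg]; rintro ⟨-, h, -⟩; exact hj h.symm
    · simp
  · intro i _ hi
    refine Finset.sum_eq_zero fun j _ => Finset.sum_eq_zero fun k _ => ?_
    rw [if_neg]; rintro ⟨h, -⟩; exact hi h.symm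
  · simp

lemma mul_star_ite (P Q : Prop) [Decidable P] [Decidable Q] (s t : ZMod d) :
    (((Real.sqrt (d ^ 3) : ℂ))⁻¹ * (if P then ee d s else 0)) *
      star (((Real.sqrt (d ^ 3) : ℂ))⁻¹ * (if Q then ee d t else 0))
    = ((Real.sqrt (d ^ 3) : ℂ))⁻¹ * ((Real.sqrt (d ^ 3) : ℂ))⁻¹ *
      (if P ∧ Q then ee d (s - t) else 0) := by
  have hc : star (((Real.sqrt (d ^ 3) : ℝ) : ℂ))⁻¹ = (((Real.sqrt (d ^ 3) : ℝ)) : ℂ)⁻¹ := by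
    rw [star_inv₀, Complex.star_def, Complex.conj_ofReal]
  by_cases hP : P <;> by_cases hQ : Q <;> simp [hP, hQ]
  rw [← Complex.star_def, ee_star, sub_eq_add_neg, ee_add]
  ring

lemma collapse (Ca Cb : ZMod d → ZMod d → ZMod d → Prop)
    [∀ x y z, Decidable (Ca x y z)] [∀ x y z, Decidable (Cb x y z)]
    (E : ZMod d → ZMod d → ZMod d → ℂ) (Ya Za Yb Zb : ZMod d → ZMod d)
    (ha : ∀ x y z, Ca x y z ↔ (y = Ya x ∧ z = Za x))
    (hb : ∀ x y z, Cb x y z ↔ (y = Yb x ∧ z = Zb x)) :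
    (∑ x : ZMod d, ∑ y : ZMod d, ∑ z : ZMod d,
      if Ca x y z ∧ Cb x y z then E x y z else 0)
    = ∑ x : ZMod d, if Ya x = Yb x ∧ Za x = Zb x then E x (Ya x) (Za x) else 0 := by
  refine Finset.sum_congr rfl fun x _ => ?_
  rw [Finset.sum_eq_single (Ya x)]
  · rw [Finset.sum_eq_single (Za x)]
    · by_cases h : Ya x = Yb x ∧ Za x = Zb x
      · rw [if_pos ⟨(ha _ _ _).mpr ⟨rfl, rfl⟩, (hb _ _ _).mpr h⟩, if_pos h]
      · rw [if_neg, if_neg h]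
        rintro ⟨-, h2⟩; exact h ((hb _ _ _).mp h2)
    · intro z _ hz; rw [if_neg]; rintro ⟨h1, -⟩; exact hz ((ha _ _ _).mp h1).2
    · simp
  · intro y _ hy
    refine Finset.sum_eq_zero fun z _ => ?_
    rw [if_neg]; rintro ⟨h1, -⟩; exact hy ((ha _ _ _).mp h1).1
  · simp

omit [NeZero d] in
lemma eq_of_pair {S : Finset (Fin 5)} {p q : Fin 5} (hp : p ∈ S) (hq : q ∈ S)
    (hmem : ∀ i : Fin 5, i ∈ S → i = p ∨ i = q) {a b : {i // i ∈ S} → ZMod d}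
    (h1 : a ⟨p, hp⟩ = b ⟨p, hp⟩) (h2 : a ⟨q, hq⟩ = b ⟨q, hq⟩) : a = b := by
  funext i; obtain ⟨i, hi⟩ := i
  rcases hmem i hi with rfl | rfl
  · exact h1
  · exact h2

omit [NeZero d] in
lemma const_diag (hd0 : (d : ℂ) ≠ 0) :
    ((Real.sqrt (d ^ 3) : ℂ))⁻¹ * ((Real.sqrt (d ^ 3) : ℂ))⁻¹ * (d : ℂ) = ((d : ℂ) ^ 2)⁻¹ := by
  have h1 : ((Real.sqrt (d ^ 3) : ℝ) : ℂ) * ((Real.sqrt (d ^ 3) : ℝ) : ℂ) = ((d : ℂ)) ^ 3 := by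
    rw [← Complex.ofReal_mul, Real.mul_self_sqrt (by positivity)]
    push_cast; ring
  rw [← mul_inv, h1]
  field_simp

set_option maxHeartbeats 1000000 in
/-- For any `d ≥ 2`, the state
`(1/√(d³)) ∑_{i,j,k} ω^{(3i+j)k} |i, j, i+j, 2i+j+k, k⟩` with `ω = e^{2πi/d}`
(arithmetic mod `d`) is 2-uniform: every two-party reduction is `(1/d²)·Id`. -/
theorem ame5d_two_uniform {d : ℕ} [NeZero d] (hd : 2 ≤ d) :
    ∀ S : Finset (Fin 5), S.card = 2 →
      reducedMatrix (fun f : Fin 5 → ZMod d =>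
        ((Real.sqrt (d ^ 3) : ℂ))⁻¹ * ∑ i : ZMod d, ∑ j : ZMod d, ∑ k : ZMod d,
          if f 0 = i ∧ f 1 = j ∧ f 2 = i + j ∧ f 3 = 2 * i + j + k ∧ f 4 = k
          then Complex.exp (2 * Real.pi * Complex.I / d) ^ (((3 * i + j) * k).val)
          else 0) S
      = (((d : ℂ) ^ 2)⁻¹) • (1 : Matrix _ _ ℂ) := by
  have hd0 : (d : ℂ) ≠ 0 := Nat.cast_ne_zero.mpr (NeZero.ne d)
  intro S hS
  have h10 : ∀ T : Finset (Fin 5), T.card = 2 →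
      (T = {0,1} ∨ T = {0,2} ∨ T = {0,3} ∨ T = {0,4} ∨ T = {1,2} ∨ T = {1,3} ∨
       T = {1,4} ∨ T = {2,3} ∨ T = {2,4} ∨ T = {3,4}) := by decide
  rcases h10 S hS with rfl | rfl | rfl | rfl | rfl | rfl | rfl | rfl | rfl | rfl
  · ext a b
    have hp : (0 : Fin 5) ∈ ({0,1} : Finset (Fin 5)) := by decide
    have hq : (1 : Fin 5) ∈ ({0,1} : Finset (Fin 5)) := by decide
    simp only [reducedMatrix, Matrix.smul_apply, Matrix.one_apply, smul_eq_mul]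
    rw [sum_compl' _ 4 2 3 (by decide) (by decide) (by decide) (by decide)]
    trans (∑ x : ZMod d, ∑ y : ZMod d, ∑ z : ZMod d,
      ((Real.sqrt (d ^ 3) : ℂ))⁻¹ * ((Real.sqrt (d ^ 3) : ℂ))⁻¹ *
        (if (y = a ⟨0, hp⟩ + a ⟨1, hq⟩ ∧ z = 2 * a ⟨0, hp⟩ + a ⟨1, hq⟩ + x)
            ∧ (y = b ⟨0, hp⟩ + b ⟨1, hq⟩ ∧ z = 2 * b ⟨0, hp⟩ + b ⟨1, hq⟩ + x)
         then ee d ((3 * a ⟨0, hp⟩ + a ⟨1, hq⟩) * x - (3 * b ⟨0, hp⟩ + b ⟨1, hq⟩) * x)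
         else 0))
    · refine Finset.sum_congr rfl fun x _ => Finset.sum_congr rfl fun y _ =>
        Finset.sum_congr rfl fun z _ => ?_
      rw [psi_apply _ (a ⟨0, hp⟩) (a ⟨1, hq⟩) (y) (z) (x) rfl rfl rfl rfl rfl,
          psi_apply _ (b ⟨0, hp⟩) (b ⟨1, hq⟩) (y) (z) (x) rfl rfl rfl rfl rfl,
          mul_star_ite]
    · simp only [← Finset.mul_sum]
      rw [collapse _ _ _ (fun _ => a ⟨0, hp⟩ + a ⟨1, hq⟩) (fun x => 2 * a ⟨0, hp⟩ + a ⟨1, hq⟩ + x)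
            (fun _ => b ⟨0, hp⟩ + b ⟨1, hq⟩) (fun x => 2 * b ⟨0, hp⟩ + b ⟨1, hq⟩ + x) (fun _ _ _ => Iff.rfl) (fun _ _ _ => Iff.rfl)]
      by_cases hab : a = b
      · subst hab
        simp [sub_self, ee_zero, Finset.card_univ, ZMod.card]
        exact const_diag hd0
      · rw [if_neg hab, mul_zero]
        refine mul_eq_zero_of_right _ ?_
        refine Finset.sum_eq_zero fun x _ => ?_
        rw [if_neg]
        rintro ⟨h1, h2⟩
        exact hab (eq_of_pair hp hq (by decide)
          (by linear_combination h2 - h1) (by linear_combination 2 * h1 - h2))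
  · ext a b
    have hp : (0 : Fin 5) ∈ ({0,2} : Finset (Fin 5)) := by decide
    have hq : (2 : Fin 5) ∈ ({0,2} : Finset (Fin 5)) := by decide
    simp only [reducedMatrix, Matrix.smul_apply, Matrix.one_apply, smul_eq_mul]
    rw [sum_compl' _ 4 1 3 (by decide) (by decide) (by decide) (by decide)]
    trans (∑ x : ZMod d, ∑ y : ZMod d, ∑ z : ZMod d,
      ((Real.sqrt (d ^ 3) : ℂ))⁻¹ * ((Real.sqrt (d ^ 3) : ℂ))⁻¹ *
        (if (a ⟨2, hq⟩ = a ⟨0, hp⟩ + y ∧ z = 2 * a ⟨0, hp⟩ + y + x)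
            ∧ (b ⟨2, hq⟩ = b ⟨0, hp⟩ + y ∧ z = 2 * b ⟨0, hp⟩ + y + x)
         then ee d ((3 * a ⟨0, hp⟩ + y) * x - (3 * b ⟨0, hp⟩ + y) * x)
         else 0))
    · refine Finset.sum_congr rfl fun x _ => Finset.sum_congr rfl fun y _ =>
        Finset.sum_congr rfl fun z _ => ?_
      rw [psi_apply _ (a ⟨0, hp⟩) (y) (a ⟨2, hq⟩) (z) (x) rfl rfl rfl rfl rfl,
          psi_apply _ (b ⟨0, hp⟩) (y) (b ⟨2, hq⟩) (z) (x) rfl rfl rfl rfl rfl,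
          mul_star_ite]
    · simp only [← Finset.mul_sum]
      have hsola : ∀ x y z : ZMod d, (a ⟨2, hq⟩ = a ⟨0, hp⟩ + y ∧ z = 2 * a ⟨0, hp⟩ + y + x) ↔
          (y = (fun _ => a ⟨2, hq⟩ - a ⟨0, hp⟩) x ∧ z = (fun x => a ⟨0, hp⟩ + a ⟨2, hq⟩ + x) x) := by
        intro x y z
        constructor
        · rintro ⟨h1, h2⟩
          exact ⟨by linear_combination -h1, by linear_combination h2 - h1⟩
        · rintro ⟨h1, h2⟩
          exact ⟨by linear_combination -h1, by linear_combination h2 - h1⟩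
      have hsolb : ∀ x y z : ZMod d, (b ⟨2, hq⟩ = b ⟨0, hp⟩ + y ∧ z = 2 * b ⟨0, hp⟩ + y + x) ↔
          (y = (fun _ => b ⟨2, hq⟩ - b ⟨0, hp⟩) x ∧ z = (fun x => b ⟨0, hp⟩ + b ⟨2, hq⟩ + x) x) := by
        intro x y z
        constructor
        · rintro ⟨h1, h2⟩
          exact ⟨by linear_combination -h1, by linear_combination h2 - h1⟩
        · rintro ⟨h1, h2⟩
          exact ⟨by linear_combination -h1, by linear_combination h2 - h1⟩
      rw [collapse _ _ _ (fun _ => a ⟨2, hq⟩ - a ⟨0, hp⟩) (fun x => a ⟨0, hp⟩ + a ⟨2, hq⟩ + x)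
            (fun _ => b ⟨2, hq⟩ - b ⟨0, hp⟩) (fun x => b ⟨0, hp⟩ + b ⟨2, hq⟩ + x) hsola hsolb]
      by_cases hab : a = b
      · subst hab
        simp [sub_self, ee_zero, Finset.card_univ, ZMod.card]
        exact const_diag hd0
      · rw [if_neg hab, mul_zero]
        refine mul_eq_zero_of_right _ ?_
        by_cases hY : a ⟨2, hq⟩ - a ⟨0, hp⟩ = b ⟨2, hq⟩ - b ⟨0, hp⟩
        · by_cases hZ : a ⟨0, hp⟩ + a ⟨2, hq⟩ = b ⟨0, hp⟩ + b ⟨2, hq⟩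
          · have h0 : a ⟨0, hp⟩ ≠ b ⟨0, hp⟩ := fun h => hab (eq_of_pair hp hq (by decide) h
              (by linear_combination hY + h))
            have key : (3 : ZMod d) * a ⟨0, hp⟩ - 3 * b ⟨0, hp⟩ ≠ 0 := fun h =>
              h0 (by linear_combination h - hZ + hY)
            trans (∑ x : ZMod d, ee d (((3 : ZMod d) * a ⟨0, hp⟩ - 3 * b ⟨0, hp⟩) * x))
            · refine Finset.sum_congr rfl fun x _ => ?_
              rw [if_pos ⟨hY, by linear_combination hZ⟩]
              congr 1
              ring
            · rw [sum_ee, if_neg key]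
          · refine Finset.sum_eq_zero fun x _ => ?_
            rw [if_neg]
            rintro ⟨-, h2⟩
            exact hZ (by linear_combination h2)
        · refine Finset.sum_eq_zero fun x _ => ?_
          rw [if_neg]
          rintro ⟨h1, -⟩
          exact hY (by linear_combination h1)
  · ext a b
    have hp : (0 : Fin 5) ∈ ({0,3} : Finset (Fin 5)) := by decide
    have hq : (3 : Fin 5) ∈ ({0,3} : Finset (Fin 5)) := by decide
    simp only [reducedMatrix, Matrix.smul_apply, Matrix.one_apply, smul_eq_mul]
    rw [sum_compl' _ 1 2 4 (by decide) (by decide) (by decide) (by decide)]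
    trans (∑ x : ZMod d, ∑ y : ZMod d, ∑ z : ZMod d,
      ((Real.sqrt (d ^ 3) : ℂ))⁻¹ * ((Real.sqrt (d ^ 3) : ℂ))⁻¹ *
        (if (y = a ⟨0, hp⟩ + x ∧ a ⟨3, hq⟩ = 2 * a ⟨0, hp⟩ + x + z)
            ∧ (y = b ⟨0, hp⟩ + x ∧ b ⟨3, hq⟩ = 2 * b ⟨0, hp⟩ + x + z)
         then ee d ((3 * a ⟨0, hp⟩ + x) * z - (3 * b ⟨0, hp⟩ + x) * z)
         else 0))
    · refine Finset.sum_congr rfl fun x _ => Finset.sum_congr rfl fun y _ =>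
        Finset.sum_congr rfl fun z _ => ?_
      rw [psi_apply _ (a ⟨0, hp⟩) (x) (y) (a ⟨3, hq⟩) (z) rfl rfl rfl rfl rfl,
          psi_apply _ (b ⟨0, hp⟩) (x) (y) (b ⟨3, hq⟩) (z) rfl rfl rfl rfl rfl,
          mul_star_ite]
    · simp only [← Finset.mul_sum]
      have hsola : ∀ x y z : ZMod d, (y = a ⟨0, hp⟩ + x ∧ a ⟨3, hq⟩ = 2 * a ⟨0, hp⟩ + x + z) ↔
          (y = (fun x => a ⟨0, hp⟩ + x) x ∧ z = (fun x => a ⟨3, hq⟩ - 2 * a ⟨0, hp⟩ - x) x) := by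
        intro x y z
        constructor
        · rintro ⟨h1, h2⟩
          exact ⟨by linear_combination h1, by linear_combination -h2⟩
        · rintro ⟨h1, h2⟩
          exact ⟨by linear_combination h1, by linear_combination -h2⟩
      have hsolb : ∀ x y z : ZMod d, (y = b ⟨0, hp⟩ + x ∧ b ⟨3, hq⟩ = 2 * b ⟨0, hp⟩ + x + z) ↔
          (y = (fun x => b ⟨0, hp⟩ + x) x ∧ z = (fun x => b ⟨3, hq⟩ - 2 * b ⟨0, hp⟩ - x) x) := by
        intro x y z
        constructor
        · rintro ⟨h1, h2⟩
          exact ⟨by linear_combination h1, by linear_combination -h2⟩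
        · rintro ⟨h1, h2⟩
          exact ⟨by linear_combination h1, by linear_combination -h2⟩
      rw [collapse _ _ _ (fun x => a ⟨0, hp⟩ + x) (fun x => a ⟨3, hq⟩ - 2 * a ⟨0, hp⟩ - x)
            (fun x => b ⟨0, hp⟩ + x) (fun x => b ⟨3, hq⟩ - 2 * b ⟨0, hp⟩ - x) hsola hsolb]
      by_cases hab : a = b
      · subst hab
        simp [sub_self, ee_zero, Finset.card_univ, ZMod.card]
        exact const_diag hd0
      · rw [if_neg hab, mul_zero]
        refine mul_eq_zero_of_right _ ?_
        refine Finset.sum_eq_zero fun x _ => ?_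
        rw [if_neg]
        rintro ⟨h1, h2⟩
        exact hab (eq_of_pair hp hq (by decide)
          (by linear_combination h1) (by linear_combination h2 + 2 * h1))
  · ext a b
    have hp : (0 : Fin 5) ∈ ({0,4} : Finset (Fin 5)) := by decide
    have hq : (4 : Fin 5) ∈ ({0,4} : Finset (Fin 5)) := by decide
    simp only [reducedMatrix, Matrix.smul_apply, Matrix.one_apply, smul_eq_mul]
    rw [sum_compl' _ 1 2 3 (by decide) (by decide) (by decide) (by decide)]
    trans (∑ x : ZMod d, ∑ y : ZMod d, ∑ z : ZMod d,
      ((Real.sqrt (d ^ 3) : ℂ))⁻¹ * ((Real.sqrt (d ^ 3) : ℂ))⁻¹ *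
        (if (y = a ⟨0, hp⟩ + x ∧ z = 2 * a ⟨0, hp⟩ + x + a ⟨4, hq⟩)
            ∧ (y = b ⟨0, hp⟩ + x ∧ z = 2 * b ⟨0, hp⟩ + x + b ⟨4, hq⟩)
         then ee d ((3 * a ⟨0, hp⟩ + x) * a ⟨4, hq⟩ - (3 * b ⟨0, hp⟩ + x) * b ⟨4, hq⟩)
         else 0))
    · refine Finset.sum_congr rfl fun x _ => Finset.sum_congr rfl fun y _ =>
        Finset.sum_congr rfl fun z _ => ?_
      rw [psi_apply _ (a ⟨0, hp⟩) (x) (y) (z) (a ⟨4, hq⟩) rfl rfl rfl rfl rfl,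
          psi_apply _ (b ⟨0, hp⟩) (x) (y) (z) (b ⟨4, hq⟩) rfl rfl rfl rfl rfl,
          mul_star_ite]
    · simp only [← Finset.mul_sum]
      rw [collapse _ _ _ (fun x => a ⟨0, hp⟩ + x) (fun x => 2 * a ⟨0, hp⟩ + x + a ⟨4, hq⟩)
            (fun x => b ⟨0, hp⟩ + x) (fun x => 2 * b ⟨0, hp⟩ + x + b ⟨4, hq⟩) (fun _ _ _ => Iff.rfl) (fun _ _ _ => Iff.rfl)]
      by_cases hab : a = b
      · subst hab
        simp [sub_self, ee_zero, Finset.card_univ, ZMod.card]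
        exact const_diag hd0
      · rw [if_neg hab, mul_zero]
        refine mul_eq_zero_of_right _ ?_
        refine Finset.sum_eq_zero fun x _ => ?_
        rw [if_neg]
        rintro ⟨h1, h2⟩
        exact hab (eq_of_pair hp hq (by decide)
          (by linear_combination h1) (by linear_combination h2 - 2 * h1))
  · ext a b
    have hp : (1 : Fin 5) ∈ ({1,2} : Finset (Fin 5)) := by decide
    have hq : (2 : Fin 5) ∈ ({1,2} : Finset (Fin 5)) := by decide
    simp only [reducedMatrix, Matrix.smul_apply, Matrix.one_apply, smul_eq_mul]
    rw [sum_compl' _ 4 0 3 (by decide) (by decide) (by decide) (by decide)]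
    trans (∑ x : ZMod d, ∑ y : ZMod d, ∑ z : ZMod d,
      ((Real.sqrt (d ^ 3) : ℂ))⁻¹ * ((Real.sqrt (d ^ 3) : ℂ))⁻¹ *
        (if (a ⟨2, hq⟩ = y + a ⟨1, hp⟩ ∧ z = 2 * y + a ⟨1, hp⟩ + x)
            ∧ (b ⟨2, hq⟩ = y + b ⟨1, hp⟩ ∧ z = 2 * y + b ⟨1, hp⟩ + x)
         then ee d ((3 * y + a ⟨1, hp⟩) * x - (3 * y + b ⟨1, hp⟩) * x)
         else 0))
    · refine Finset.sum_congr rfl fun x _ => Finset.sum_congr rfl fun y _ =>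
        Finset.sum_congr rfl fun z _ => ?_
      rw [psi_apply _ (y) (a ⟨1, hp⟩) (a ⟨2, hq⟩) (z) (x) rfl rfl rfl rfl rfl,
          psi_apply _ (y) (b ⟨1, hp⟩) (b ⟨2, hq⟩) (z) (x) rfl rfl rfl rfl rfl,
          mul_star_ite]
    · simp only [← Finset.mul_sum]
      have hsola : ∀ x y z : ZMod d, (a ⟨2, hq⟩ = y + a ⟨1, hp⟩ ∧ z = 2 * y + a ⟨1, hp⟩ + x) ↔
          (y = (fun _ => a ⟨2, hq⟩ - a ⟨1, hp⟩) x ∧ z = (fun x => 2 * a ⟨2, hq⟩ - a ⟨1, hp⟩ + x) x) := by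
        intro x y z
        constructor
        · rintro ⟨h1, h2⟩
          exact ⟨by linear_combination -h1, by linear_combination h2 - 2 * h1⟩
        · rintro ⟨h1, h2⟩
          exact ⟨by linear_combination -h1, by linear_combination h2 - 2 * h1⟩
      have hsolb : ∀ x y z : ZMod d, (b ⟨2, hq⟩ = y + b ⟨1, hp⟩ ∧ z = 2 * y + b ⟨1, hp⟩ + x) ↔
          (y = (fun _ => b ⟨2, hq⟩ - b ⟨1, hp⟩) x ∧ z = (fun x => 2 * b ⟨2, hq⟩ - b ⟨1, hp⟩ + x) x) := by
        intro x y z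
        constructor
        · rintro ⟨h1, h2⟩
          exact ⟨by linear_combination -h1, by linear_combination h2 - 2 * h1⟩
        · rintro ⟨h1, h2⟩
          exact ⟨by linear_combination -h1, by linear_combination h2 - 2 * h1⟩
      rw [collapse _ _ _ (fun _ => a ⟨2, hq⟩ - a ⟨1, hp⟩) (fun x => 2 * a ⟨2, hq⟩ - a ⟨1, hp⟩ + x)
            (fun _ => b ⟨2, hq⟩ - b ⟨1, hp⟩) (fun x => 2 * b ⟨2, hq⟩ - b ⟨1, hp⟩ + x) hsola hsolb]
      by_cases hab : a = b
      · subst hab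
        simp [sub_self, ee_zero, Finset.card_univ, ZMod.card]
        exact const_diag hd0
      · rw [if_neg hab, mul_zero]
        refine mul_eq_zero_of_right _ ?_
        refine Finset.sum_eq_zero fun x _ => ?_
        rw [if_neg]
        rintro ⟨h1, h2⟩
        exact hab (eq_of_pair hp hq (by decide)
          (by linear_combination h2 - 2 * h1) (by linear_combination h2 - h1))
  · ext a b
    have hp : (1 : Fin 5) ∈ ({1,3} : Finset (Fin 5)) := by decide
    have hq : (3 : Fin 5) ∈ ({1,3} : Finset (Fin 5)) := by decide
    simp only [reducedMatrix, Matrix.smul_apply, Matrix.one_apply, smul_eq_mul]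
    rw [sum_compl' _ 0 2 4 (by decide) (by decide) (by decide) (by decide)]
    trans (∑ x : ZMod d, ∑ y : ZMod d, ∑ z : ZMod d,
      ((Real.sqrt (d ^ 3) : ℂ))⁻¹ * ((Real.sqrt (d ^ 3) : ℂ))⁻¹ *
        (if (y = x + a ⟨1, hp⟩ ∧ a ⟨3, hq⟩ = 2 * x + a ⟨1, hp⟩ + z)
            ∧ (y = x + b ⟨1, hp⟩ ∧ b ⟨3, hq⟩ = 2 * x + b ⟨1, hp⟩ + z)
         then ee d ((3 * x + a ⟨1, hp⟩) * z - (3 * x + b ⟨1, hp⟩) * z)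
         else 0))
    · refine Finset.sum_congr rfl fun x _ => Finset.sum_congr rfl fun y _ =>
        Finset.sum_congr rfl fun z _ => ?_
      rw [psi_apply _ (x) (a ⟨1, hp⟩) (y) (a ⟨3, hq⟩) (z) rfl rfl rfl rfl rfl,
          psi_apply _ (x) (b ⟨1, hp⟩) (y) (b ⟨3, hq⟩) (z) rfl rfl rfl rfl rfl,
          mul_star_ite]
    · simp only [← Finset.mul_sum]
      have hsola : ∀ x y z : ZMod d, (y = x + a ⟨1, hp⟩ ∧ a ⟨3, hq⟩ = 2 * x + a ⟨1, hp⟩ + z) ↔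
          (y = (fun x => x + a ⟨1, hp⟩) x ∧ z = (fun x => a ⟨3, hq⟩ - 2 * x - a ⟨1, hp⟩) x) := by
        intro x y z
        constructor
        · rintro ⟨h1, h2⟩
          exact ⟨by linear_combination h1, by linear_combination -h2⟩
        · rintro ⟨h1, h2⟩
          exact ⟨by linear_combination h1, by linear_combination -h2⟩
      have hsolb : ∀ x y z : ZMod d, (y = x + b ⟨1, hp⟩ ∧ b ⟨3, hq⟩ = 2 * x + b ⟨1, hp⟩ + z) ↔
          (y = (fun x => x + b ⟨1, hp⟩) x ∧ z = (fun x => b ⟨3, hq⟩ - 2 * x - b ⟨1, hp⟩) x) := by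
        intro x y z
        constructor
        · rintro ⟨h1, h2⟩
          exact ⟨by linear_combination h1, by linear_combination -h2⟩
        · rintro ⟨h1, h2⟩
          exact ⟨by linear_combination h1, by linear_combination -h2⟩
      rw [collapse _ _ _ (fun x => x + a ⟨1, hp⟩) (fun x => a ⟨3, hq⟩ - 2 * x - a ⟨1, hp⟩)
            (fun x => x + b ⟨1, hp⟩) (fun x => b ⟨3, hq⟩ - 2 * x - b ⟨1, hp⟩) hsola hsolb]
      by_cases hab : a = b
      · subst hab
        simp [sub_self, ee_zero, Finset.card_univ, ZMod.card]
        exact const_diag hd0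
      · rw [if_neg hab, mul_zero]
        refine mul_eq_zero_of_right _ ?_
        refine Finset.sum_eq_zero fun x _ => ?_
        rw [if_neg]
        rintro ⟨h1, h2⟩
        exact hab (eq_of_pair hp hq (by decide)
          (by linear_combination h1) (by linear_combination h2 + h1))
  · ext a b
    have hp : (1 : Fin 5) ∈ ({1,4} : Finset (Fin 5)) := by decide
    have hq : (4 : Fin 5) ∈ ({1,4} : Finset (Fin 5)) := by decide
    simp only [reducedMatrix, Matrix.smul_apply, Matrix.one_apply, smul_eq_mul]
    rw [sum_compl' _ 0 2 3 (by decide) (by decide) (by decide) (by decide)]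
    trans (∑ x : ZMod d, ∑ y : ZMod d, ∑ z : ZMod d,
      ((Real.sqrt (d ^ 3) : ℂ))⁻¹ * ((Real.sqrt (d ^ 3) : ℂ))⁻¹ *
        (if (y = x + a ⟨1, hp⟩ ∧ z = 2 * x + a ⟨1, hp⟩ + a ⟨4, hq⟩)
            ∧ (y = x + b ⟨1, hp⟩ ∧ z = 2 * x + b ⟨1, hp⟩ + b ⟨4, hq⟩)
         then ee d ((3 * x + a ⟨1, hp⟩) * a ⟨4, hq⟩ - (3 * x + b ⟨1, hp⟩) * b ⟨4, hq⟩)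
         else 0))
    · refine Finset.sum_congr rfl fun x _ => Finset.sum_congr rfl fun y _ =>
        Finset.sum_congr rfl fun z _ => ?_
      rw [psi_apply _ (x) (a ⟨1, hp⟩) (y) (z) (a ⟨4, hq⟩) rfl rfl rfl rfl rfl,
          psi_apply _ (x) (b ⟨1, hp⟩) (y) (z) (b ⟨4, hq⟩) rfl rfl rfl rfl rfl,
          mul_star_ite]
    · simp only [← Finset.mul_sum]
      rw [collapse _ _ _ (fun x => x + a ⟨1, hp⟩) (fun x => 2 * x + a ⟨1, hp⟩ + a ⟨4, hq⟩)
            (fun x => x + b ⟨1, hp⟩) (fun x => 2 * x + b ⟨1, hp⟩ + b ⟨4, hq⟩) (fun _ _ _ => Iff.rfl) (fun _ _ _ => Iff.rfl)]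
      by_cases hab : a = b
      · subst hab
        simp [sub_self, ee_zero, Finset.card_univ, ZMod.card]
        exact const_diag hd0
      · rw [if_neg hab, mul_zero]
        refine mul_eq_zero_of_right _ ?_
        refine Finset.sum_eq_zero fun x _ => ?_
        rw [if_neg]
        rintro ⟨h1, h2⟩
        exact hab (eq_of_pair hp hq (by decide)
          (by linear_combination h1) (by linear_combination h2 - h1))
  · ext a b
    have hp : (2 : Fin 5) ∈ ({2,3} : Finset (Fin 5)) := by decide
    have hq : (3 : Fin 5) ∈ ({2,3} : Finset (Fin 5)) := by decide
    simp only [reducedMatrix, Matrix.smul_apply, Matrix.one_apply, smul_eq_mul]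
    rw [sum_compl' _ 0 1 4 (by decide) (by decide) (by decide) (by decide)]
    trans (∑ x : ZMod d, ∑ y : ZMod d, ∑ z : ZMod d,
      ((Real.sqrt (d ^ 3) : ℂ))⁻¹ * ((Real.sqrt (d ^ 3) : ℂ))⁻¹ *
        (if (a ⟨2, hp⟩ = x + y ∧ a ⟨3, hq⟩ = 2 * x + y + z)
            ∧ (b ⟨2, hp⟩ = x + y ∧ b ⟨3, hq⟩ = 2 * x + y + z)
         then ee d ((3 * x + y) * z - (3 * x + y) * z)
         else 0))
    · refine Finset.sum_congr rfl fun x _ => Finset.sum_congr rfl fun y _ =>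
        Finset.sum_congr rfl fun z _ => ?_
      rw [psi_apply _ (x) (y) (a ⟨2, hp⟩) (a ⟨3, hq⟩) (z) rfl rfl rfl rfl rfl,
          psi_apply _ (x) (y) (b ⟨2, hp⟩) (b ⟨3, hq⟩) (z) rfl rfl rfl rfl rfl,
          mul_star_ite]
    · simp only [← Finset.mul_sum]
      have hsola : ∀ x y z : ZMod d, (a ⟨2, hp⟩ = x + y ∧ a ⟨3, hq⟩ = 2 * x + y + z) ↔
          (y = (fun x => a ⟨2, hp⟩ - x) x ∧ z = (fun x => a ⟨3, hq⟩ - a ⟨2, hp⟩ - x) x) := by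
        intro x y z
        constructor
        · rintro ⟨h1, h2⟩
          exact ⟨by linear_combination -h1, by linear_combination h1 - h2⟩
        · rintro ⟨h1, h2⟩
          exact ⟨by linear_combination -h1, by linear_combination -h1 - h2⟩
      have hsolb : ∀ x y z : ZMod d, (b ⟨2, hp⟩ = x + y ∧ b ⟨3, hq⟩ = 2 * x + y + z) ↔
          (y = (fun x => b ⟨2, hp⟩ - x) x ∧ z = (fun x => b ⟨3, hq⟩ - b ⟨2, hp⟩ - x) x) := by
        intro x y z
        constructor
        · rintro ⟨h1, h2⟩
          exact ⟨by linear_combination -h1, by linear_combination h1 - h2⟩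
        · rintro ⟨h1, h2⟩
          exact ⟨by linear_combination -h1, by linear_combination -h1 - h2⟩
      rw [collapse _ _ _ (fun x => a ⟨2, hp⟩ - x) (fun x => a ⟨3, hq⟩ - a ⟨2, hp⟩ - x)
            (fun x => b ⟨2, hp⟩ - x) (fun x => b ⟨3, hq⟩ - b ⟨2, hp⟩ - x) hsola hsolb]
      by_cases hab : a = b
      · subst hab
        simp [sub_self, ee_zero, Finset.card_univ, ZMod.card]
        exact const_diag hd0
      · rw [if_neg hab, mul_zero]
        refine mul_eq_zero_of_right _ ?_
        refine Finset.sum_eq_zero fun x _ => ?_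
        rw [if_neg]
        rintro ⟨h1, h2⟩
        exact hab (eq_of_pair hp hq (by decide)
          (by linear_combination h1) (by linear_combination h2 + h1))
  · ext a b
    have hp : (2 : Fin 5) ∈ ({2,4} : Finset (Fin 5)) := by decide
    have hq : (4 : Fin 5) ∈ ({2,4} : Finset (Fin 5)) := by decide
    simp only [reducedMatrix, Matrix.smul_apply, Matrix.one_apply, smul_eq_mul]
    rw [sum_compl' _ 0 1 3 (by decide) (by decide) (by decide) (by decide)]
    trans (∑ x : ZMod d, ∑ y : ZMod d, ∑ z : ZMod d,
      ((Real.sqrt (d ^ 3) : ℂ))⁻¹ * ((Real.sqrt (d ^ 3) : ℂ))⁻¹ *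
        (if (a ⟨2, hp⟩ = x + y ∧ z = 2 * x + y + a ⟨4, hq⟩)
            ∧ (b ⟨2, hp⟩ = x + y ∧ z = 2 * x + y + b ⟨4, hq⟩)
         then ee d ((3 * x + y) * a ⟨4, hq⟩ - (3 * x + y) * b ⟨4, hq⟩)
         else 0))
    · refine Finset.sum_congr rfl fun x _ => Finset.sum_congr rfl fun y _ =>
        Finset.sum_congr rfl fun z _ => ?_
      rw [psi_apply _ (x) (y) (a ⟨2, hp⟩) (z) (a ⟨4, hq⟩) rfl rfl rfl rfl rfl,
          psi_apply _ (x) (y) (b ⟨2, hp⟩) (z) (b ⟨4, hq⟩) rfl rfl rfl rfl rfl,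
          mul_star_ite]
    · simp only [← Finset.mul_sum]
      have hsola : ∀ x y z : ZMod d, (a ⟨2, hp⟩ = x + y ∧ z = 2 * x + y + a ⟨4, hq⟩) ↔
          (y = (fun x => a ⟨2, hp⟩ - x) x ∧ z = (fun x => x + a ⟨2, hp⟩ + a ⟨4, hq⟩) x) := by
        intro x y z
        constructor
        · rintro ⟨h1, h2⟩
          exact ⟨by linear_combination -h1, by linear_combination h2 - h1⟩
        · rintro ⟨h1, h2⟩
          exact ⟨by linear_combination -h1, by linear_combination h2 - h1⟩
      have hsolb : ∀ x y z : ZMod d, (b ⟨2, hp⟩ = x + y ∧ z = 2 * x + y + b ⟨4, hq⟩) ↔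
          (y = (fun x => b ⟨2, hp⟩ - x) x ∧ z = (fun x => x + b ⟨2, hp⟩ + b ⟨4, hq⟩) x) := by
        intro x y z
        constructor
        · rintro ⟨h1, h2⟩
          exact ⟨by linear_combination -h1, by linear_combination h2 - h1⟩
        · rintro ⟨h1, h2⟩
          exact ⟨by linear_combination -h1, by linear_combination h2 - h1⟩
      rw [collapse _ _ _ (fun x => a ⟨2, hp⟩ - x) (fun x => x + a ⟨2, hp⟩ + a ⟨4, hq⟩)
            (fun x => b ⟨2, hp⟩ - x) (fun x => x + b ⟨2, hp⟩ + b ⟨4, hq⟩) hsola hsolb]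
      by_cases hab : a = b
      · subst hab
        simp [sub_self, ee_zero, Finset.card_univ, ZMod.card]
        exact const_diag hd0
      · rw [if_neg hab, mul_zero]
        refine mul_eq_zero_of_right _ ?_
        refine Finset.sum_eq_zero fun x _ => ?_
        rw [if_neg]
        rintro ⟨h1, h2⟩
        exact hab (eq_of_pair hp hq (by decide)
          (by linear_combination h1) (by linear_combination h2 - h1))
  · ext a b
    have hp : (3 : Fin 5) ∈ ({3,4} : Finset (Fin 5)) := by decide
    have hq : (4 : Fin 5) ∈ ({3,4} : Finset (Fin 5)) := by decide
    simp only [reducedMatrix, Matrix.smul_apply, Matrix.one_apply, smul_eq_mul]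
    rw [sum_compl' _ 0 1 2 (by decide) (by decide) (by decide) (by decide)]
    trans (∑ x : ZMod d, ∑ y : ZMod d, ∑ z : ZMod d,
      ((Real.sqrt (d ^ 3) : ℂ))⁻¹ * ((Real.sqrt (d ^ 3) : ℂ))⁻¹ *
        (if (z = x + y ∧ a ⟨3, hp⟩ = 2 * x + y + a ⟨4, hq⟩)
            ∧ (z = x + y ∧ b ⟨3, hp⟩ = 2 * x + y + b ⟨4, hq⟩)
         then ee d ((3 * x + y) * a ⟨4, hq⟩ - (3 * x + y) * b ⟨4, hq⟩)
         else 0))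
    · refine Finset.sum_congr rfl fun x _ => Finset.sum_congr rfl fun y _ =>
        Finset.sum_congr rfl fun z _ => ?_
      rw [psi_apply _ (x) (y) (z) (a ⟨3, hp⟩) (a ⟨4, hq⟩) rfl rfl rfl rfl rfl,
          psi_apply _ (x) (y) (z) (b ⟨3, hp⟩) (b ⟨4, hq⟩) rfl rfl rfl rfl rfl,
          mul_star_ite]
    · simp only [← Finset.mul_sum]
      have hsola : ∀ x y z : ZMod d, (z = x + y ∧ a ⟨3, hp⟩ = 2 * x + y + a ⟨4, hq⟩) ↔
          (y = (fun x => a ⟨3, hp⟩ - a ⟨4, hq⟩ - 2 * x) x ∧ z = (fun x => a ⟨3, hp⟩ - a ⟨4, hq⟩ - x) x) := by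
        intro x y z
        constructor
        · rintro ⟨h1, h2⟩
          exact ⟨by linear_combination -h2, by linear_combination h1 - h2⟩
        · rintro ⟨h1, h2⟩
          exact ⟨by linear_combination h2 - h1, by linear_combination -h1⟩
      have hsolb : ∀ x y z : ZMod d, (z = x + y ∧ b ⟨3, hp⟩ = 2 * x + y + b ⟨4, hq⟩) ↔
          (y = (fun x => b ⟨3, hp⟩ - b ⟨4, hq⟩ - 2 * x) x ∧ z = (fun x => b ⟨3, hp⟩ - b ⟨4, hq⟩ - x) x) := by
        intro x y z
        constructor
        · rintro ⟨h1, h2⟩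
          exact ⟨by linear_combination -h2, by linear_combination h1 - h2⟩
        · rintro ⟨h1, h2⟩
          exact ⟨by linear_combination h2 - h1, by linear_combination -h1⟩
      rw [collapse _ _ _ (fun x => a ⟨3, hp⟩ - a ⟨4, hq⟩ - 2 * x) (fun x => a ⟨3, hp⟩ - a ⟨4, hq⟩ - x)
            (fun x => b ⟨3, hp⟩ - b ⟨4, hq⟩ - 2 * x) (fun x => b ⟨3, hp⟩ - b ⟨4, hq⟩ - x) hsola hsolb]
      by_cases hab : a = b
      · subst hab
        simp [sub_self, ee_zero, Finset.card_univ, ZMod.card]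
        exact const_diag hd0
      · rw [if_neg hab, mul_zero]
        refine mul_eq_zero_of_right _ ?_
        by_cases h4 : a ⟨4, hq⟩ = b ⟨4, hq⟩
        · refine Finset.sum_eq_zero fun x _ => ?_
          rw [if_neg]
          rintro ⟨h1, -⟩
          exact hab (eq_of_pair hp hq (by decide) (by linear_combination h1 + h4) h4)
        · by_cases hY : a ⟨3, hp⟩ - a ⟨4, hq⟩ = b ⟨3, hp⟩ - b ⟨4, hq⟩
          · trans (∑ x : ZMod d, ee d ((a ⟨4, hq⟩ - b ⟨4, hq⟩) * x +
                (a ⟨3, hp⟩ - a ⟨4, hq⟩) * (a ⟨4, hq⟩ - b ⟨4, hq⟩)))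
            · refine Finset.sum_congr rfl fun x _ => ?_
              rw [if_pos ⟨by linear_combination hY, by linear_combination hY⟩]
              congr 1
              ring
            · simp only [ee_add]
              rw [← Finset.sum_mul, sum_ee, if_neg (sub_ne_zero_of_ne h4), zero_mul]
          · refine Finset.sum_eq_zero fun x _ => ?_
            rw [if_neg]
            rintro ⟨h1, -⟩
            exact hY (by linear_combination h1)
end
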